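/- Let R be a UFD and a ∈ R a nonzero nonunit such that R/(a) is finite. Then I_r(R/(a)) ≥ D((R/(a))^×) + Ω(a) - ω(a), where Ω(a) is the number of prime factors of a counted with multiplicity and ω(a) the number of distinct prime factors (up to units). -/

import Mathlib

theorem pow_fact_idem' {M : Type*} [CommMonoid M] [Finite M] (x : M) :
    x ^ Nat.factorial (Nat.card M) * x ^ Nat.factorial (Nat.card M)
      = x ^ Nat.factorial (Nat.card M) := by
  have := Fintype.ofFinite M
  set n := Nat.card M with hn
  have hn1 : 1 ≤ n := Nat.card_pos
  obtain ⟨a, b, ha1, hab, hbn, heq⟩ : ∃ a b : ℕ, 1 ≤ a ∧ a < b ∧ b ≤ n + 1 ∧ x ^ a = x ^ b := by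
    have hninj : ¬ Function.Injective (fun k : Fin (n+1) => x ^ ((k : ℕ) + 1)) := by
      intro hinj
      have h2 := Fintype.card_le_of_injective _ hinj
      rw [Fintype.card_fin, ← Nat.card_eq_fintype_card] at h2
      omega
    rw [Function.not_injective_iff] at hninj
    obtain ⟨i, j, hij, hne⟩ := hninj
    rcases Nat.lt_or_ge (i : ℕ) (j : ℕ) with h | h
    · exact ⟨(i:ℕ)+1, (j:ℕ)+1, by omega, by omega, by omega, hij⟩
    · have hji : (j:ℕ) < (i:ℕ) := by
        rcases Nat.lt_or_ge (j:ℕ) (i:ℕ) with h' | h'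
        · exact h'
        · exact absurd (Fin.ext (by omega)) hne
      exact ⟨(j:ℕ)+1, (i:ℕ)+1, by omega, by omega, by omega, hij.symm⟩
  set p := b - a with hpdef
  have hp1 : 1 ≤ p := by omega
  have hpn : p ≤ n := by omega
  have hstep : x ^ a = x ^ (a + p) := by rw [heq]; congr 1; omega
  have key : ∀ s, x ^ a = x ^ (a + p * s) := by
    intro s; induction s with
    | zero => simp
    | succ s ih =>
      have h1 : x ^ (a + p * (s+1)) = x ^ (a + p * s) * x ^ p := by
        rw [← pow_add]; congr 1; ring
      rw [h1, ← ih, ← pow_add, ← hstep]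
  have hpd : p ∣ Nat.factorial n := Nat.dvd_factorial hp1 hpn
  have han : a ≤ Nat.factorial n := le_trans (by omega) (Nat.self_le_factorial n)
  obtain ⟨s, hs⟩ := hpd
  calc x ^ Nat.factorial n * x ^ Nat.factorial n = x ^ (Nat.factorial n - a) * x ^ (a + p * s) := by
        rw [← pow_add, ← pow_add]; congr 1; omega
    _ = x ^ (Nat.factorial n - a) * x ^ a := by rw [← key]
    _ = x ^ Nat.factorial n := by rw [← pow_add]; congr 1; omega

theorem EB_mem' {M : Type*} [CommMonoid M] [Finite M] :
    ((Nat.factorial (Nat.card M) - 1) * Nat.card M + 1) ∈ {t : ℕ | 0 < t ∧ ∀ f : Fin t → M,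
      ∃ T : Finset (Fin t), T.Nonempty ∧ (∏ i ∈ T, f i) * (∏ i ∈ T, f i) = ∏ i ∈ T, f i} := by
  have := Fintype.ofFinite M
  set n := Nat.card M with hn
  have hn1 : 1 ≤ n := Nat.card_pos
  set E := Nat.factorial n with hE
  have hE1 : 1 ≤ E := Nat.factorial_pos n
  refine ⟨by omega, fun f => ?_⟩
  classical
  obtain ⟨y, -, hy⟩ := Finset.exists_lt_card_fiber_of_mul_lt_card_of_maps_to
    (s := (Finset.univ : Finset (Fin ((E-1)*n+1)))) (t := (Finset.univ : Finset M))
    (f := f) (fun a _ => Finset.mem_univ _) (by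
      rw [Finset.card_univ, Finset.card_univ, Fintype.card_fin, ← Nat.card_eq_fintype_card, ← hn]
      nlinarith [hn1, hE1])
  have hEle : E ≤ (Finset.univ.filter fun x => f x = y).card := by omega
  obtain ⟨T, hTsub, hTcard⟩ := Finset.exists_subset_card_eq hEle
  refine ⟨T, Finset.card_pos.mp (by omega), ?_⟩
  have hprod : ∏ i ∈ T, f i = y ^ E := by
    have hc : ∀ i ∈ T, f i = y := fun i hi => (Finset.mem_filter.mp (hTsub hi)).2
    rw [Finset.prod_congr rfl hc, Finset.prod_const, hTcard]
  rw [hprod]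
  exact pow_fact_idem' y

theorem EB_up' {M : Type*} [CommMonoid M] {t t' : ℕ} (h : t ≤ t')
    (ht : t ∈ {t : ℕ | 0 < t ∧ ∀ f : Fin t → M,
      ∃ T : Finset (Fin t), T.Nonempty ∧ (∏ i ∈ T, f i) * (∏ i ∈ T, f i) = ∏ i ∈ T, f i}) :
    t' ∈ {t : ℕ | 0 < t ∧ ∀ f : Fin t → M,
      ∃ T : Finset (Fin t), T.Nonempty ∧ (∏ i ∈ T, f i) * (∏ i ∈ T, f i) = ∏ i ∈ T, f i} := by
  classical
  obtain ⟨ht0, hall⟩ := ht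
  refine ⟨by omega, fun f => ?_⟩
  obtain ⟨T, hTne, hTprod⟩ := hall (fun i => f (Fin.castLE h i))
  refine ⟨T.map ⟨Fin.castLE h, Fin.castLE_injective h⟩, by simpa using hTne, ?_⟩
  rw [Finset.prod_map]
  exact hTprod


theorem count_pow_not_dvd' {R : Type*} [CommMonoidWithZero R] [IsCancelMulZero R] [DecidableEq R]
    (p : R) (hp : Prime p) (s : Multiset R) (hs : ∀ q ∈ s, Prime q)
    (hd : ∀ q ∈ s, Associated p q → p = q) :
    ¬ p ^ (s.count p + 1) ∣ s.prod := by
  induction s using Multiset.induction_on with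
  | empty =>
    simp only [Multiset.count_zero, zero_add, pow_one, Multiset.prod_zero]
    exact fun h => hp.not_unit (isUnit_of_dvd_one h)
  | cons q t ih =>
    have hq : Prime q := hs q (Multiset.mem_cons_self q t)
    have hst : ∀ r ∈ t, Prime r := fun r hr => hs r (Multiset.mem_cons_of_mem hr)
    have hdt : ∀ r ∈ t, Associated p r → p = r := fun r hr =>
      hd r (Multiset.mem_cons_of_mem hr)
    intro hdvd
    rw [Multiset.prod_cons] at hdvd
    by_cases hpq : p = q
    · subst hpq
      rw [Multiset.count_cons_self] at hdvd
      have : p ^ (t.count p + 1) ∣ t.prod := by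
        have h0 : p ≠ 0 := hp.ne_zero
        have : p * p ^ (t.count p + 1) ∣ p * t.prod := by
          rw [← pow_succ']
          exact hdvd
        exact (mul_dvd_mul_iff_left h0).mp this
      exact ih hst hdt this
    · have hnd : ¬ p ∣ q := by
        intro hpq'
        exact hpq (hd q (Multiset.mem_cons_self q t)
          ((hp.associated_of_dvd hq) hpq'))
      rw [Multiset.count_cons_of_ne hpq] at hdvd
      exact ih hst hdt (hp.pow_dvd_of_dvd_mul_left _ hnd hdvd)

/-- The Davenport constant of a (multiplicative) commutative group: the least `k > 0` such
that every sequence of `k` elements has a nonempty subsequence with product `1`. -/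
noncomputable def Davenport (G : Type*) [CommGroup G] : ℕ :=
  sInf {k : ℕ | 0 < k ∧ ∀ f : Fin k → G,
    ∃ T : Finset (Fin k), T.Nonempty ∧ ∏ i ∈ T, f i = 1}

/-- The Erdős–Burgess constant of a commutative monoid: the least `t > 0` such that every
sequence of `t` elements has a nonempty subsequence whose product is idempotent. -/
noncomputable def ErdosBurgess (M : Type*) [CommMonoid M] : ℕ :=
  sInf {t : ℕ | 0 < t ∧ ∀ f : Fin t → M,
    ∃ T : Finset (Fin t), T.Nonempty ∧ (∏ i ∈ T, f i) * (∏ i ∈ T, f i) = ∏ i ∈ T, f i}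

theorem stmt16 {R : Type*} [CommRing R] [IsDomain R] [UniqueFactorizationMonoid R]
    [DecidableEq R] (a : R) (ha : a ≠ 0) (hu : ¬ IsUnit a)
    [Finite (R ⧸ Ideal.span {a})] (f : Multiset R) (hf : ∀ b ∈ f, Prime b)
    (hassoc : Associated f.prod a)
    (hdist : ∀ b ∈ f, ∀ c ∈ f, Associated b c → b = c) :
    Davenport ((R ⧸ Ideal.span {a})ˣ) + Multiset.card f - f.toFinset.card ≤
      ErdosBurgess (R ⧸ Ideal.span {a}) := by
  classical
  set Q := R ⧸ Ideal.span {a} with hQ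
  set ψ : R →+* Q := Ideal.Quotient.mk (Ideal.span {a}) with hψ
  have hψsurj : Function.Surjective ψ := Ideal.Quotient.mk_surjective
  set D := Davenport Qˣ with hD
  set d := D - 1 with hd
  -- zero-product-free sequence of units
  obtain ⟨g, hg⟩ : ∃ g : Fin d → Qˣ, ∀ T : Finset (Fin d), T.Nonempty →
      ∏ i ∈ T, g i ≠ 1 := by
    by_cases hd0 : d = 0
    · refine ⟨fun _ => 1, fun T hT _ => ?_⟩
      obtain ⟨i, -⟩ := hT
      have := i.2
      omega
    · have hmem : d ∉ {k : ℕ | 0 < k ∧ ∀ f : Fin k → Qˣ,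
          ∃ T : Finset (Fin k), T.Nonempty ∧ ∏ i ∈ T, f i = 1} := by
        intro hmem
        have := Nat.sInf_le hmem
        rw [← Davenport] at this  -- may fail
        omega
      simp only [Set.mem_setOf_eq, not_and, not_forall] at hmem
      obtain ⟨g, hg⟩ := hmem (by omega)
      refine ⟨g, fun T hT hprod => hg ⟨T, hT, hprod⟩⟩
  -- the multiset of repeated prime factors
  set m : Multiset R := f - f.toFinset.val with hm
  have hmf : m ≤ f := Multiset.sub_le_self f f.toFinset.val
  set l : List R := m.toList with hl
  have hlm : (l : Multiset R) = m := Multiset.coe_toList m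
  set n := l.length with hn
  have hnm : n = Multiset.card m := by rw [hn, ← hlm]; simp
  set L := n + d with hL
  -- the bad sequence
  set F : Fin L → Q := fun i =>
    Sum.elim (fun i : Fin n => ψ (l.get i)) (fun j : Fin d => ((g j : Qˣ) : Q))
      (finSumFinEquiv.symm i) with hF
  -- badness
  have hbad : ∀ T : Finset (Fin L), T.Nonempty →
      (∏ i ∈ T, F i) * (∏ i ∈ T, F i) ≠ ∏ i ∈ T, F i := by
    intro T hTne hidem
    set U : Finset (Fin n ⊕ Fin d) := T.map finSumFinEquiv.symm.toEmbedding with hUdef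
    set T₁ := U.toLeft with hT1
    set T₂ := U.toRight with hT2
    have h1 : (∏ i ∈ T₁, ψ (l.get i)) * (∏ j ∈ T₂, ((g j : Qˣ) : Q)) = ∏ i ∈ T, F i := by
      rw [← Finset.prod_sumElim, Finset.toLeft_disjSum_toRight, hUdef, Finset.prod_map]
      rfl
    set u : Qˣ := ∏ j ∈ T₂, g j with hu
    have h2 : ∏ j ∈ T₂, ((g j : Qˣ) : Q) = ((u : Qˣ) : Q) :=
      (map_prod (Units.coeHom Q) g T₂).symm
    set s₁ : Multiset R := T₁.val.map l.get with hs₁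
    set c : R := s₁.prod with hc
    have h3 : ∏ i ∈ T₁, ψ (l.get i) = ψ c := (map_prod ψ (fun i => l.get i) T₁).symm
    obtain ⟨v, hv⟩ := hψsurj ((u : Qˣ) : Q)
    have hx : ∏ i ∈ T, F i = ψ (c * v) := by
      rw [← h1, h2, h3, map_mul, hv]
    -- divisibility from idempotency
    have hdvd : a ∣ (c * v) * ((c * v) - 1) := by
      have : ψ ((c * v) * (c * v)) = ψ (c * v) := by
        rw [map_mul, ← hx]; exact hidem
      have hmem : (c * v) * (c * v) - (c * v) ∈ Ideal.span {a} :=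
        Ideal.Quotient.eq.mp this
      have := Ideal.mem_span_singleton.mp hmem
      convert this using 1; ring
    -- s₁ facts
    have hs₁m : s₁ ≤ m := by
      have hTuniv : T₁.val ≤ (Finset.univ : Finset (Fin n)).val :=
        Finset.val_le_iff.mpr (Finset.subset_univ T₁)
      have huniv : Multiset.map l.get (Finset.univ : Finset (Fin n)).val = (l : Multiset R) := by
        have : (Finset.univ : Finset (Fin n)).val = ((List.finRange n : List (Fin n)) : Multiset (Fin n)) := rfl
        rw [this, Multiset.map_coe, ← List.ofFn_eq_map, List.ofFn_get]
      calc s₁ = Multiset.map l.get T₁.val := rfl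
        _ ≤ Multiset.map l.get (Finset.univ : Finset (Fin n)).val := Multiset.map_le_map hTuniv
        _ = (l : Multiset R) := huniv
        _ = m := hlm
    have hs₁f : s₁ ≤ f := le_trans hs₁m hmf
    -- case split
    rcases hTne with ⟨i₀, hi₀⟩
    have hi₀U : finSumFinEquiv.symm i₀ ∈ U := by
      rw [hUdef, Finset.mem_map]
      exact ⟨i₀, hi₀, rfl⟩
    have hcase : T₁.Nonempty ∨ T₂.Nonempty := by
      rcases hsum : finSumFinEquiv.symm i₀ with x | y
      · left; exact ⟨x, Finset.mem_toLeft.mpr (hsum ▸ hi₀U)⟩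
      · right; exact ⟨y, Finset.mem_toRight.mpr (hsum ▸ hi₀U)⟩
    by_cases hT1ne : T₁.Nonempty
    · -- prime case
      obtain ⟨j₀, hj₀⟩ := hT1ne
      set p : R := l.get j₀ with hp
      have hps₁ : p ∈ s₁ := Multiset.mem_map_of_mem l.get (by exact hj₀)
      have hpm : p ∈ m := Multiset.mem_of_le hs₁m hps₁
      have hpf : p ∈ f := Multiset.mem_of_le hmf hpm
      have hpprime : Prime p := hf p hpf
      set k := f.count p with hk
      have hk1 : 1 ≤ k := Multiset.count_pos.mpr hpf
      have hpka : p ^ k ∣ a := by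
        have hrep : Multiset.replicate k p ≤ f :=
          Multiset.le_count_iff_replicate_le.mp (le_of_eq rfl)
        have : p ^ k ∣ f.prod := by
          rw [← Multiset.prod_replicate]
          exact Multiset.prod_dvd_prod_of_le hrep
        exact this.trans hassoc.dvd
      have hpa : p ∣ a := (dvd_pow_self p (by omega : k ≠ 0)).trans hpka
      have hpv : ¬ p ∣ v := by
        intro hpv
        obtain ⟨w, hw⟩ := hψsurj ((u⁻¹ : Qˣ) : Q)
        have hvw : ψ (v * w) = ψ 1 := by
          rw [map_mul, hv, hw, ← Units.val_mul, mul_inv_cancel, Units.val_one, map_one]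
        have hdvw : a ∣ v * w - 1 := Ideal.mem_span_singleton.mp (Ideal.Quotient.eq.mp hvw)
        have hp1 : p ∣ 1 := by
          have h4 : p ∣ v * w - 1 := hpa.trans hdvw
          have h5 : p ∣ v * w := hpv.mul_right w
          have := dvd_sub h5 h4
          simpa using this
        exact hpprime.not_unit (isUnit_of_dvd_one hp1)
      have hpc : p ∣ c := Multiset.dvd_prod hps₁
      have hpcv1 : ¬ p ∣ (c * v - 1) := by
        intro h4
        have h5 : p ∣ c * v := Dvd.dvd.mul_right hpc v
        have := dvd_sub h5 h4
        exact hpprime.not_unit (isUnit_of_dvd_one (by simpa using this))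
      have hpkcv : p ^ k ∣ c * v :=
        hpprime.pow_dvd_of_dvd_mul_right k hpcv1 (hpka.trans hdvd)
      have hpkc : p ^ k ∣ c :=
        hpprime.pow_dvd_of_dvd_mul_right k hpv hpkcv
      -- count contradiction
      have hcount : s₁.count p + 1 ≤ k := by
        have hc1 : s₁.count p ≤ m.count p := Multiset.count_le_of_le p hs₁m
        have hc2 : m.count p = k - 1 := by
          rw [hm, Multiset.count_sub]
          have h6 : Multiset.count p f.toFinset.val = 1 :=
            Multiset.count_eq_one_of_mem f.toFinset.nodup
              (Multiset.mem_toFinset.mpr hpf)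
          rw [h6]
        omega
      have hnd : ¬ p ^ (s₁.count p + 1) ∣ s₁.prod :=
        count_pow_not_dvd' p hpprime s₁ (fun q hq => hf q (Multiset.mem_of_le hs₁f hq))
          (fun q hq hassq => hdist p hpf q (Multiset.mem_of_le hs₁f hq) hassq)
      exact hnd ((pow_dvd_pow p hcount).trans hpkc)
    · -- unit case
      have hT2ne : T₂.Nonempty := hcase.resolve_left hT1ne
      have hT1e : T₁ = ∅ := Finset.not_nonempty_iff_eq_empty.mp hT1ne
      have hc1 : c = 1 := by
        rw [hc, hs₁, hT1e]
        simp
      have hxu : ∏ i ∈ T, F i = ((u : Qˣ) : Q) := by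
        rw [hx, hc1, one_mul, hv]
      rw [hxu] at hidem
      have huu : u * u = u := Units.ext (by rw [Units.val_mul]; exact hidem)
      have huu' : u * u = u * 1 := by rw [mul_one]; exact huu
      have hu1 : u = 1 := mul_left_cancel huu'
      exact hg T₂ hT2ne hu1
  -- conclude
  have hSne : {t : ℕ | 0 < t ∧ ∀ fq : Fin t → Q,
      ∃ T : Finset (Fin t), T.Nonempty ∧ (∏ i ∈ T, fq i) * (∏ i ∈ T, fq i) = ∏ i ∈ T, fq i}.Nonempty :=
    ⟨_, EB_mem'⟩
  have hEB : L + 1 ≤ ErdosBurgess Q := by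
    rw [ErdosBurgess]
    refine le_csInf hSne fun t ht => ?_
    by_contra hlt
    push_neg at hlt
    have hLmem := EB_up' (M := Q) (by omega : t ≤ L) ht
    obtain ⟨-, hall⟩ := hLmem
    obtain ⟨T, hTne, hTprod⟩ := hall F
    exact hbad T hTne hTprod
  have hων : f.toFinset.card ≤ Multiset.card f := Multiset.toFinset_card_le f
  have hmcard : Multiset.card m = Multiset.card f - f.toFinset.card := by
    have h1 : f.toFinset.val = f.dedup := rfl
    rw [hm, h1, Multiset.card_sub (Multiset.dedup_le f)]
    rfl
  have hQQ : ErdosBurgess (R ⧸ Ideal.span {a}) = ErdosBurgess Q := rfl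
  rw [hQQ]
  omega
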